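/- Let p > 0 and q > 0 with p ≠ q, let K = (1/p)·[[p+q, p−q],[p−q, p+q]] with entries k_ij, and set λ₀ = 4·min{2, 2q/p}. Let R₀ > 0 and let v₁, v₂ : ℝ² → ℝ be C³ on {|x| > R₀}, with v₁, v₂, |∇v₁| and |∇v₂| all tending to 0 as |x| → ∞, satisfying for all |x| > R₀ and i = 1, 2: Δv_i = 2k_{i1}v₁ + 2k_{i2}v₂ + 2k_{i1}(e^{v₁} − v₁ − 1) + 2k_{i2}(e^{v₂} − v₂ − 1). Then for every δ ∈ (0,1) there exist a constant C_δ > 0 and a radius R ≥ R₀ such that |∇v₁(x)|² + |∇v₂(x)|² ≤ C_δ·e^{−(1−δ)·√λ₀·|x|} for all |x| ≥ R. -/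

import Mathlib

open Filter

/-- The Laplacian `Δf = ∂₁²f + ∂₂²f` of a function on `ℝ²`, expressed through
iterated directional derivatives along the standard basis. -/
noncomputable def lap (f : EuclideanSpace ℝ (Fin 2) → ℝ) (x : EuclideanSpace ℝ (Fin 2)) : ℝ :=
  ∑ i : Fin 2,
    fderiv ℝ (fun y => fderiv ℝ f y (EuclideanSpace.single i 1)) x (EuclideanSpace.single i 1)

open Real

notation "E2" => EuclideanSpace ℝ (Fin 2)


lemma norm_clm_sq (L : E2 →L[ℝ] ℝ) :
    ‖L‖ ^ 2 = ∑ i : Fin 2, (L (EuclideanSpace.single i 1)) ^ 2 := by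
  set v : E2 := (InnerProductSpace.toDual ℝ E2).symm L with hv
  have hnorm : ‖L‖ = ‖v‖ := ((InnerProductSpace.toDual ℝ E2).symm.norm_map L).symm
  have happ : ∀ i : Fin 2, L (EuclideanSpace.single i 1) = v i := by
    intro i
    have : L (EuclideanSpace.single i 1) = inner ℝ v (EuclideanSpace.single i 1) := by
      rw [hv]
      simp [InnerProductSpace.toDual_symm_apply]
    rw [this, real_inner_comm]
    simp [EuclideanSpace.inner_single_left]
  rw [hnorm]
  have := EuclideanSpace.norm_eq v
  rw [this, Real.sq_sqrt (by positivity)]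
  simp [happ, sq_abs]

lemma second_deriv_test_1d {g : ℝ → ℝ} (hg : ∀ᶠ t in nhds (0:ℝ), DifferentiableAt ℝ g t)
    {a : ℝ} (ha : HasDerivAt (deriv g) a 0) (hmax : IsLocalMax g 0) : a ≤ 0 := by
  by_contra h
  push_neg at h
  have h0 : deriv g 0 = 0 := hmax.deriv_eq_zero
  -- slope of deriv g tends to a > 0
  have hs : Tendsto (fun t => deriv g t / t) (nhdsWithin 0 {(0:ℝ)}ᶜ) (nhds a) := by
    have := hasDerivAt_iff_tendsto_slope.1 ha
    have h2 : (fun t => deriv g t / t) =ᶠ[nhdsWithin 0 {(0:ℝ)}ᶜ] slope (deriv g) 0 := by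
      filter_upwards with t
      simp [slope_def_field, h0]
    exact Tendsto.congr' h2.symm this
  have hpos : ∀ᶠ t in nhdsWithin 0 {(0:ℝ)}ᶜ, 0 < deriv g t / t :=
    hs.eventually (eventually_gt_nhds h)
  obtain ⟨ε, hε, hball⟩ := Metric.mem_nhdsWithin_iff.1 hpos
  obtain ⟨ε₂, hε₂, hball2⟩ := Metric.eventually_nhds_iff.1 hg
  obtain ⟨ε₃, hε₃, hball3⟩ := Metric.eventually_nhds_iff.1 hmax
  set r := min ε (min ε₂ ε₃) with hr
  have hrpos : 0 < r := by positivity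
  -- g is strict mono on [0, r/2]
  have hmono : StrictMonoOn g (Set.Icc 0 (r/2)) := by
    apply strictMonoOn_of_deriv_pos (convex_Icc _ _)
    · apply ContinuousOn.mono (s := Metric.ball (0:ℝ) ε₂)
      · intro t ht
        exact (hball2 (by simpa using ht)).continuousAt.continuousWithinAt
      · intro t ht
        simp only [Metric.mem_ball, Real.dist_eq, sub_zero]
        have := ht.1; have := ht.2
        have : |t| ≤ r/2 := by
          rw [abs_le]; constructor <;> [linarith [ht.1]; linarith [ht.2]]
        have : r/2 < ε₂ := by
          have : r ≤ ε₂ := le_trans (min_le_right _ _) (min_le_left _ _)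
          linarith
        linarith [abs_le.1 (by rw [abs_le]; exact ⟨by linarith [ht.1], by linarith [ht.2]⟩ : |t| ≤ r/2)]
    · intro t ht
      simp only [interior_Icc, Set.mem_Ioo] at ht
      have htmem : t ∈ Metric.ball (0:ℝ) ε ∩ {(0:ℝ)}ᶜ := by
        constructor
        · simp only [Metric.mem_ball, Real.dist_eq, sub_zero]
          have : r ≤ ε := min_le_left _ _
          rw [abs_of_pos ht.1]; linarith [ht.2]
        · simp only [Set.mem_compl_iff, Set.mem_singleton_iff]
          exact ne_of_gt ht.1
      have hmem2 := hball htmem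
      simp only [Set.mem_setOf_eq] at hmem2
      rcases div_pos_iff.1 hmem2 with ⟨h1, _⟩ | ⟨_, h2⟩
      · exact h1
      · linarith [ht.1]
  have h1 : g 0 < g (r/2) := by
    apply hmono
    · exact ⟨le_rfl, by positivity⟩
    · exact ⟨by positivity, le_rfl⟩
    · positivity
  have h2 : g (r/2) ≤ g 0 := by
    apply hball3
    simp only [Real.dist_eq, sub_zero]
    rw [abs_of_pos (by positivity)]
    have : r ≤ ε₃ := le_trans (min_le_right _ _) (min_le_right _ _)
    linarith
  linarith





lemma lap_nonpos_of_localmax {h : E2 → ℝ} {x₀ : E2} (hreg : ContDiffAt ℝ 2 h x₀)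
    (hmax : IsLocalMax h x₀) : lap h x₀ ≤ 0 := by
  have hev : ∀ᶠ y in nhds x₀, DifferentiableAt ℝ h y := by
    have := hreg.contDiffOn (m := 1) (by norm_num) (by norm_num)
    obtain ⟨u, hu, hcd⟩ := this
    rcases mem_nhds_iff.1 hu with ⟨v, hvu, hvopen, hxv⟩
    filter_upwards [hvopen.mem_nhds hxv] with y hy
    exact (hcd.mono (le_trans hvu (by simp))).differentiableOn (by norm_num) |>.differentiableAt
      (hvopen.mem_nhds hy)
  apply Finset.sum_nonpos
  intro i _
  set e : E2 := EuclideanSpace.single i 1 with he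
  set φ : E2 → ℝ := fun y => fderiv ℝ h y e with hφ
  set ℓ : ℝ → E2 := fun t => x₀ + t • e with hℓ
  have hℓ0 : ℓ 0 = x₀ := by simp [hℓ]
  have hℓd : ∀ t : ℝ, HasDerivAt ℓ e t := by
    intro t
    simpa [hℓ] using ((hasDerivAt_id t).smul_const e).const_add x₀
  set g : ℝ → ℝ := fun t => h (ℓ t) with hgdef
  have hℓcont : Continuous ℓ := by fun_prop
  -- g differentiable near 0
  have hgd : ∀ᶠ t in nhds (0:ℝ), DifferentiableAt ℝ g t := by
    have : Tendsto ℓ (nhds 0) (nhds x₀) := by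
      rw [← hℓ0]; exact hℓcont.continuousAt
    filter_upwards [this.eventually hev] with t ht
    exact ht.comp t (hℓd t).differentiableAt
  -- deriv g near 0
  have hderiv : ∀ᶠ t in nhds (0:ℝ), deriv g t = φ (ℓ t) := by
    have : Tendsto ℓ (nhds 0) (nhds x₀) := by
      rw [← hℓ0]; exact hℓcont.continuousAt
    filter_upwards [this.eventually hev] with t ht
    have : HasDerivAt g (fderiv ℝ h (ℓ t) e) t :=
      (ht.hasFDerivAt.comp_hasDerivAt t (hℓd t))
    exact this.deriv
  -- φ differentiable at x₀
  have hφd : DifferentiableAt ℝ φ x₀ := by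
    have h1 : ContDiffAt ℝ 1 (fderiv ℝ h) x₀ := hreg.fderiv_right (by norm_num)
    exact (h1.differentiableAt (by norm_num)).clm_apply (differentiableAt_const e)
  -- HasDerivAt (deriv g) (fderiv φ x₀ e) 0
  have hkey : HasDerivAt (deriv g) (fderiv ℝ φ x₀ e) 0 := by
    have h1 : HasDerivAt (φ ∘ ℓ) (fderiv ℝ φ x₀ e) 0 := by
      have hφd' : HasFDerivAt φ (fderiv ℝ φ x₀) (ℓ 0) := by rw [hℓ0]; exact hφd.hasFDerivAt
      exact hφd'.comp_hasDerivAt 0 (hℓd 0)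
    exact h1.congr_of_eventuallyEq hderiv
  have hgmax : IsLocalMax g 0 := by
    have hmax' : IsLocalMax h (ℓ 0) := by rw [hℓ0]; exact hmax
    exact hmax'.comp_continuous hℓcont.continuousAt
  exact second_deriv_test_1d hgd hkey hgmax


lemma eventually_diff_of_contDiffAt {f : E2 → ℝ} {x : E2} (hf : ContDiffAt ℝ 2 f x) :
    ∀ᶠ y in nhds x, DifferentiableAt ℝ f y := by
  have := hf.contDiffOn (m := 1) (by norm_num) (by norm_num)
  obtain ⟨u, hu, hcd⟩ := this
  rcases mem_nhds_iff.1 hu with ⟨v, hvu, hvopen, hxv⟩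
  filter_upwards [hvopen.mem_nhds hxv] with y hy
  exact (hcd.mono (le_trans hvu (by simp))).differentiableOn (by norm_num) |>.differentiableAt
    (hvopen.mem_nhds hy)

lemma differentiableAt_pd {f : E2 → ℝ} {x : E2} (hf : ContDiffAt ℝ 2 f x) (e : E2) :
    DifferentiableAt ℝ (fun y => fderiv ℝ f y e) x := by
  have h1 : ContDiffAt ℝ 1 (fderiv ℝ f) x := hf.fderiv_right (by norm_num)
  exact (h1.differentiableAt (by norm_num)).clm_apply (differentiableAt_const e)

lemma lap_sub {f g : E2 → ℝ} {x : E2} (hf : ContDiffAt ℝ 2 f x) (hg : ContDiffAt ℝ 2 g x) :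
    lap (fun y => f y - g y) x = lap f x - lap g x := by
  unfold lap
  rw [← Finset.sum_sub_distrib]
  apply Finset.sum_congr rfl
  intro i _
  set e : E2 := EuclideanSpace.single i 1
  have heq : (fun y => fderiv ℝ (fun z => f z - g z) y e)
      =ᶠ[nhds x] fun y => fderiv ℝ f y e - fderiv ℝ g y e := by
    filter_upwards [eventually_diff_of_contDiffAt hf, eventually_diff_of_contDiffAt hg]
      with y hfy hgy
    rw [fderiv_fun_sub hfy hgy]
    rfl
  rw [heq.fderiv_eq, fderiv_fun_sub (differentiableAt_pd hf e) (differentiableAt_pd hg e)]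
  rfl

lemma lap_const_mul {f : E2 → ℝ} {x : E2} (hf : ContDiffAt ℝ 2 f x) (c : ℝ) :
    lap (fun y => c * f y) x = c * lap f x := by
  unfold lap
  rw [Finset.mul_sum]
  apply Finset.sum_congr rfl
  intro i _
  set e : E2 := EuclideanSpace.single i 1
  have heq : (fun y => fderiv ℝ (fun z => c * f z) y e)
      =ᶠ[nhds x] fun y => c * fderiv ℝ f y e := by
    filter_upwards [eventually_diff_of_contDiffAt hf] with y hfy
    rw [fderiv_const_mul hfy]
    rfl
  rw [heq.fderiv_eq, fderiv_const_mul (differentiableAt_pd hf e)]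
  rfl

noncomputable def psi1 (α s : ℝ) : ℝ := Real.exp (-α * Real.sqrt s)
noncomputable def psi2 (α s : ℝ) : ℝ := Real.exp (-α * Real.sqrt s) * (-α / (2 * Real.sqrt s))
noncomputable def psi3 (α s : ℝ) : ℝ :=
  Real.exp (-α * Real.sqrt s) * (α^2 / (4 * s) + α / (4 * s * Real.sqrt s))

lemma psi1_hasDeriv (α : ℝ) {s : ℝ} (hs : 0 < s) : HasDerivAt (psi1 α) (psi2 α s) s := by
  have h1 : HasDerivAt (fun u => -α * Real.sqrt u) (-α * (1 / (2 * Real.sqrt s))) s :=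
    (Real.hasDerivAt_sqrt hs.ne').const_mul (-α)
  have := h1.exp
  unfold psi1
  convert this using 1
  unfold psi2
  field_simp

lemma psi2_hasDeriv (α : ℝ) {s : ℝ} (hs : 0 < s) : HasDerivAt (psi2 α) (psi3 α s) s := by
  obtain ⟨t, ht0, rfl⟩ : ∃ t:ℝ, 0 < t ∧ s = t^2 :=
    ⟨Real.sqrt s, Real.sqrt_pos.2 hs, (Real.sq_sqrt hs.le).symm⟩
  have hts : Real.sqrt (t^2) = t := Real.sqrt_sq ht0.le
  have htne : t ≠ 0 := ht0.ne'
  have h1 : HasDerivAt (fun u => Real.exp (-α * Real.sqrt u))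
      (Real.exp (-α*t) * (-α * (1/(2*t)))) (t^2) := by
    have := ((Real.hasDerivAt_sqrt (by positivity : (t^2:ℝ) ≠ 0)).const_mul (-α)).exp
    rwa [hts] at this
  have h2 : HasDerivAt (fun u => -α / (2 * Real.sqrt u)) (α / (4 * t^3)) (t^2) := by
    have hinv := (Real.hasDerivAt_sqrt (by positivity : (t^2:ℝ) ≠ 0)).inv
      (by rw [hts]; exact htne)
    rw [hts] at hinv
    have h3 := hinv.const_mul (-α/2)
    have hfun : (fun u => -α / (2 * Real.sqrt u)) = fun u => -α/2 * (Real.sqrt u)⁻¹ := by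
      funext u; field_simp
    rw [hfun]
    refine h3.congr_deriv ?_
    field_simp
    ring
  have hmul := h1.fun_mul h2
  have hfun2 : psi2 α = fun u =>
      (fun u => Real.exp (-α * Real.sqrt u)) u * (fun u => -α / (2 * Real.sqrt u)) u := rfl
  rw [hfun2]
  refine hmul.congr_deriv ?_
  unfold psi3
  rw [hts]
  field_simp
  ring







lemma sq_hasFDerivAt (y : E2) :
    HasFDerivAt (fun z : E2 => ‖z‖^2) ((2:ℕ) • (innerSL ℝ y)) y := by
  have := (hasFDerivAt_id y).norm_sq
  simpa using this

lemma inner_single (y : E2) (j : Fin 2) : (innerSL ℝ y) (EuclideanSpace.single j 1) = y j := by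
  simp [EuclideanSpace.inner_single_right, real_inner_comm]

-- first derivative of the radial function, valid for ‖y‖ > 0
lemma radial_fderiv_apply (α : ℝ) {y : E2} (hy : 0 < ‖y‖) (j : Fin 2) :
    fderiv ℝ (fun z => psi1 α (‖z‖^2)) y (EuclideanSpace.single j 1)
      = psi2 α (‖y‖^2) * (2 * y j) := by
  have hs : (0:ℝ) < ‖y‖^2 := by positivity
  have h : HasFDerivAt (fun z : E2 => psi1 α (‖z‖^2))
      (psi2 α (‖y‖^2) • ((2:ℕ) • (innerSL ℝ y))) y := by
    exact (psi1_hasDeriv α hs).comp_hasFDerivAt (h₂ := psi1 α) y (sq_hasFDerivAt y)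
  rw [h.fderiv]
  simp only [ContinuousLinearMap.smul_apply, inner_single, smul_eq_mul, nsmul_eq_mul,
    Nat.cast_ofNat]
  try ring

lemma radial_lap (α : ℝ) {x : E2} (hx : 0 < ‖x‖) :
    lap (fun z => psi1 α (‖z‖^2)) x
      = (α^2 - α / ‖x‖) * Real.exp (-α * ‖x‖) := by
  have hopen : IsOpen {y : E2 | 0 < ‖y‖} := by
    have : {y : E2 | 0 < ‖y‖} = {(0:E2)}ᶜ := by
      ext y; simp [norm_pos_iff]
    rw [this]; exact isOpen_compl_singleton
  have hsx : (0:ℝ) < ‖x‖^2 := by positivity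
  have key : ∀ j : Fin 2,
      fderiv ℝ (fun y => fderiv ℝ (fun z => psi1 α (‖z‖^2)) y (EuclideanSpace.single j 1)) x
          (EuclideanSpace.single j 1)
        = psi3 α (‖x‖^2) * (2 * x j) * (2 * x j) + psi2 α (‖x‖^2) * 2 := by
    intro j
    have heq : (fun y => fderiv ℝ (fun z => psi1 α (‖z‖^2)) y (EuclideanSpace.single j 1))
        =ᶠ[nhds x] (fun y => psi2 α (‖y‖^2) * (2 * y j)) := by
      filter_upwards [hopen.mem_nhds hx] with y hy
      exact radial_fderiv_apply α hy j
    rw [heq.fderiv_eq]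
    -- product rule
    have h1 : HasFDerivAt (fun y : E2 => psi2 α (‖y‖^2))
        (psi3 α (‖x‖^2) • ((2:ℕ) • (innerSL ℝ x))) x := by
      exact (psi2_hasDeriv α hsx).comp_hasFDerivAt (h₂ := psi2 α) x (sq_hasFDerivAt x)
    have h2 : HasFDerivAt (fun y : E2 => 2 * y j)
        ((2:ℝ) • (EuclideanSpace.proj (𝕜 := ℝ) j : E2 →L[ℝ] ℝ)) x := by
      have := (EuclideanSpace.proj (𝕜 := ℝ) j : E2 →L[ℝ] ℝ).hasFDerivAt (x := x)
      simpa using this.const_mul (2:ℝ)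
    have := h1.fun_mul h2
    rw [this.fderiv]
    have hproj : (EuclideanSpace.proj (𝕜 := ℝ) j : E2 →L[ℝ] ℝ) (EuclideanSpace.single j 1) = 1 := by
      simp
    simp only [ContinuousLinearMap.add_apply, ContinuousLinearMap.smul_apply, hproj,
      inner_single, smul_eq_mul, nsmul_eq_mul, Nat.cast_ofNat]
    ring
  have hnorm : ‖x‖^2 = ∑ j : Fin 2, (x j)^2 := by
    rw [EuclideanSpace.norm_eq, Real.sq_sqrt (by positivity)]
    simp [sq_abs]
  unfold lap
  simp only [key]
  rw [Finset.sum_add_distrib]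
  have hterm : ∀ j : Fin 2, psi3 α (‖x‖^2) * (2 * x j) * (2 * x j)
      = 4 * psi3 α (‖x‖^2) * (x j)^2 := by intro j; ring
  simp only [hterm]
  rw [← Finset.mul_sum, ← hnorm, Finset.sum_const]
  simp only [Finset.card_univ, Fintype.card_fin, smul_eq_mul]
  -- now pure computation
  have hr : Real.sqrt (‖x‖^2) = ‖x‖ := Real.sqrt_sq (norm_nonneg x)
  unfold psi2 psi3
  rw [hr]
  have hxne : ‖x‖ ≠ 0 := hx.ne'
  field_simp
  have : ‖x‖ * ‖x‖⁻¹ = 1 := mul_inv_cancel₀ hxne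
  linear_combination (-2*α*rexp (-(α*‖x‖))) * this










lemma psi1_eq (α : ℝ) (y : E2) : psi1 α (‖y‖^2) = Real.exp (-α * ‖y‖) := by
  unfold psi1; rw [Real.sqrt_sq (norm_nonneg y)]

lemma radial_contDiffAt (α : ℝ) {x : E2} (hx : x ≠ 0) :
    ContDiffAt ℝ 2 (fun y : E2 => Real.exp (-α * ‖y‖)) x := by
  have h1 : ContDiffAt ℝ 2 (fun y : E2 => ‖y‖) x := contDiffAt_norm ℝ hx
  exact Real.contDiff_exp.contDiffAt.comp x ((h1.const_smul (-α)).congr_of_eventuallyEq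
    (by filter_upwards with y; simp [smul_eq_mul]))

lemma max_principle (W : E2 → ℝ) (μ α CC R₂ : ℝ) (hμα : α^2 < μ) (hα : 0 < α) (hCC : 0 < CC)
    (hR₂ : 0 < R₂)
    (hWcont : ContinuousOn W {x : E2 | R₂ ≤ ‖x‖})
    (hWC2 : ∀ x : E2, R₂ < ‖x‖ → ContDiffAt ℝ 2 W x)
    (hlim : Tendsto W (cocompact E2) (nhds 0))
    (hlap : ∀ x : E2, R₂ < ‖x‖ → μ * W x ≤ lap W x)
    (hbd : ∀ x : E2, ‖x‖ = R₂ → W x ≤ CC * Real.exp (-α * ‖x‖)) :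
    ∀ x : E2, R₂ ≤ ‖x‖ → W x ≤ CC * Real.exp (-α * ‖x‖) := by
  set g : E2 → ℝ := fun y => CC * Real.exp (-α * ‖y‖) with hg
  set h : E2 → ℝ := fun y => W y - g y with hh
  by_contra hcon
  push_neg at hcon
  obtain ⟨x₀, hx₀R, hx₀⟩ := hcon
  have hhx₀ : 0 < h x₀ := by simp only [hh, hg]; linarith
  -- g tends to 0 at infinity
  have hgnorm : Tendsto (fun y : E2 => ‖y‖) (cocompact E2) atTop :=
    tendsto_norm_cocompact_atTop
  have hg0 : Tendsto g (cocompact E2) (nhds 0) := by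
    have h1 : Tendsto (fun t : ℝ => CC * Real.exp (-α * t)) atTop (nhds 0) := by
      have : Tendsto (fun t : ℝ => -α * t) atTop atBot :=
        tendsto_id.const_mul_atTop_of_neg (by linarith)
      have := (Real.tendsto_exp_atBot.comp this).const_mul CC
      simpa using this
    exact h1.comp hgnorm
  have hh0 : Tendsto h (cocompact E2) (nhds 0) := by
    have := hlim.sub hg0
    simpa using this
  -- eventually h < h x₀
  have hev : ∀ᶠ x in cocompact E2, h x < h x₀ :=
    hh0.eventually (eventually_lt_nhds hhx₀)
  obtain ⟨K, hK, hKsub⟩ := hasBasis_cocompact.eventually_iff.1 hev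
  obtain ⟨r, hr⟩ := hK.isBounded.subset_closedBall 0
  set R₃ : ℝ := max r (max ‖x₀‖ R₂) + 1 with hR₃
  have hR₃big : ∀ x : E2, R₃ ≤ ‖x‖ → h x < h x₀ := by
    intro x hx
    apply hKsub
    intro hmem
    have := hr hmem
    simp only [Metric.mem_closedBall, dist_zero_right] at this
    have : r ≤ R₃ - 1 := by simp [hR₃]
    linarith [le_max_left r (max ‖x₀‖ R₂), hr hmem, (by
      simpa [dist_zero_right] using hr hmem : ‖x‖ ≤ r)]
  -- compact annulus
  set A : Set E2 := {x | R₂ ≤ ‖x‖ ∧ ‖x‖ ≤ R₃} with hA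
  have hAcomp : IsCompact A := by
    have h1 : A = Metric.closedBall 0 R₃ ∩ {x : E2 | R₂ ≤ ‖x‖} := by
      ext y
      simp [hA, Metric.mem_closedBall, dist_zero_right, and_comm]
    rw [h1]
    exact (isCompact_closedBall 0 R₃).inter_right
      (isClosed_le continuous_const continuous_norm)
  have hx₀A : x₀ ∈ A := by
    refine ⟨hx₀R, ?_⟩
    have : ‖x₀‖ ≤ max ‖x₀‖ R₂ := le_max_left _ _
    have : max ‖x₀‖ R₂ ≤ max r (max ‖x₀‖ R₂) := le_max_right _ _
    simp only [hR₃]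
    linarith [le_max_left ‖x₀‖ R₂, le_max_right r (max ‖x₀‖ R₂)]
  have hhcont : ContinuousOn h A := by
    apply ContinuousOn.sub
    · exact hWcont.mono (fun y hy => hy.1)
    · exact (continuous_const.mul (Real.continuous_exp.comp
        (continuous_const.mul continuous_norm))).continuousOn
  have ⟨z, hzA, hzmax⟩ := hAcomp.exists_isMaxOn ⟨x₀, hx₀A⟩ hhcont
  have hzval : h x₀ ≤ h z := hzmax hx₀A
  have hzpos : 0 < h z := lt_of_lt_of_le hhx₀ hzval
  -- R₂ < ‖z‖
  have hzR : R₂ < ‖z‖ := by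
    rcases lt_or_eq_of_le hzA.1 with h' | h'
    · exact h'
    · exfalso
      have hb := hbd z h'.symm
      have : h z ≤ 0 := by simp only [hh, hg]; linarith
      linarith
  -- z is a local max of h in the ambient space
  have hzloc : IsLocalMax h z := by
    have hball : Metric.ball z (‖z‖ - R₂) ∈ nhds z := Metric.ball_mem_nhds z (by linarith)
    filter_upwards [hball] with y hy
    have hynorm : R₂ < ‖y‖ := by
      have := norm_sub_norm_le y z
      simp only [Metric.mem_ball, dist_eq_norm] at hy
      have h2 : ‖z‖ - ‖y - z‖ ≤ ‖y‖ := by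
        have := norm_sub_norm_le z y
        rw [norm_sub_rev] at this
        linarith [abs_le.1 (abs_norm_sub_norm_le z y)]
      linarith
    rcases le_or_gt ‖y‖ R₃ with h' | h'
    · exact hzmax ⟨hynorm.le, h'⟩
    · exact le_of_lt (lt_of_lt_of_le (hR₃big y h'.le) hzval)
  -- contradiction via laplacian
  have hzne : z ≠ 0 := by
    intro hzz
    rw [hzz] at hzR; simp at hzR; linarith
  have hWz : ContDiffAt ℝ 2 W z := hWC2 z hzR
  have hgz : ContDiffAt ℝ 2 (fun y : E2 => Real.exp (-α * ‖y‖)) z := radial_contDiffAt α hzne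
  have hlap_h : lap h z = lap W z - CC * lap (fun y : E2 => Real.exp (-α * ‖y‖)) z := by
    have h1 : lap h z = lap W z - lap g z := lap_sub hWz (hgz.const_smul CC |>.congr_of_eventuallyEq
      (by filter_upwards with y; simp [hg, smul_eq_mul]))
    rw [h1, lap_const_mul hgz CC]
  have hlapg : lap (fun y : E2 => Real.exp (-α * ‖y‖)) z
      = (α^2 - α / ‖z‖) * Real.exp (-α * ‖z‖) := by
    have : (fun y : E2 => Real.exp (-α * ‖y‖)) = fun y => psi1 α (‖y‖^2) := by
      funext y; rw [psi1_eq]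
    rw [this]
    exact radial_lap α (by linarith)
  have hlapW : μ * W z ≤ lap W z := hlap z hzR
  have hlaph_nonpos : lap h z ≤ 0 := lap_nonpos_of_localmax
    (hWz.sub (hgz.const_smul CC |>.congr_of_eventuallyEq
      (by filter_upwards with y; simp [hg, smul_eq_mul]))) hzloc
  -- numeric contradiction
  have hgzpos : 0 < g z := by
    simp only [hg]
    positivity
  have hWzval : W z = h z + g z := by simp [hh]
  have hμpos : 0 < μ := lt_of_le_of_lt (sq_nonneg α) hμα
  have hEz : Real.exp (-α * ‖z‖) > 0 := Real.exp_pos _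
  have hzn : 0 < ‖z‖ := by linarith
  have hest : CC * ((α^2 - α / ‖z‖) * Real.exp (-α * ‖z‖)) ≤ α^2 * g z := by
    simp only [hg]
    have h1 : α^2 - α / ‖z‖ ≤ α^2 := by
      have : 0 < α / ‖z‖ := by positivity
      linarith
    have h2 : (0:ℝ) ≤ CC * Real.exp (-α * ‖z‖) := by positivity
    nlinarith [mul_le_mul_of_nonneg_right h1 h2]
  have : 0 < lap h z := by
    rw [hlap_h, hlapg]
    have h2 : μ * W z = μ * h z + μ * g z := by rw [hWzval]; ring
    nlinarith [mul_pos hμpos hzpos, mul_pos (sub_pos.2 hμα) hgzpos, hest, hlapW, h2]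
  linarith



noncomputable def pd (i : Fin 2) (f : E2 → ℝ) : E2 → ℝ :=
  fun x => fderiv ℝ f x (EuclideanSpace.single i 1)

lemma lap_eq (f : E2 → ℝ) (x : E2) :
    lap f x = ∑ i : Fin 2, fderiv ℝ (pd i f) x (EuclideanSpace.single i 1) := rfl





lemma pd_contDiffAt {f : E2 → ℝ} {x : E2} (hf : ContDiffAt ℝ 3 f x) (i : Fin 2) :
    ContDiffAt ℝ 2 (pd i f) x := by
  exact (hf.fderiv_right (by norm_num)).clm_apply contDiffAt_const

lemma pd_apply_snd {f : E2 → ℝ} {x : E2} (hf : ContDiffAt ℝ 2 f x) (a b : E2) :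
    fderiv ℝ (fun y => fderiv ℝ f y b) x a = fderiv ℝ (fderiv ℝ f) x a b := by
  have hd : DifferentiableAt ℝ (fderiv ℝ f) x :=
    (hf.fderiv_right (m := 1) (by norm_num)).differentiableAt (by norm_num)
  have h := hd.hasFDerivAt.clm_apply (hasFDerivAt_const b x)
  rw [h.fderiv]
  simp

lemma pd_symm {f : E2 → ℝ} {x : E2} (hf : ContDiffAt ℝ 2 f x) (i j : Fin 2) :
    pd i (pd j f) x = pd j (pd i f) x := by
  unfold pd
  rw [pd_apply_snd hf, pd_apply_snd hf]
  exact (hf.isSymmSndFDerivAt (by norm_num)) _ _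

lemma sum_pd_pd_pd {f : E2 → ℝ} {U : Set E2} (hU : IsOpen U) {x : E2} (hx : x ∈ U)
    (hf : ContDiffOn ℝ 3 f U) (i : Fin 2) :
    ∑ j : Fin 2, pd j (pd j (pd i f)) x = pd i (lap f) x := by
  have hC3 : ∀ y ∈ U, ContDiffAt ℝ 3 f y := fun y hy => hf.contDiffAt (hU.mem_nhds hy)
  have step : ∀ j : Fin 2, pd j (pd j (pd i f)) x = pd i (pd j (pd j f)) x := by
    intro j
    have h1 : pd j (pd i f) =ᶠ[nhds x] pd i (pd j f) := by
      filter_upwards [hU.mem_nhds hx] with y hy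
      exact pd_symm ((hC3 y hy).of_le (by norm_num)) j i
    have h2 : pd j (pd j (pd i f)) x = pd j (pd i (pd j f)) x := by
      unfold pd
      exact congrFun (congrArg _ (h1.fderiv_eq)) _
    rw [h2]
    exact (pd_symm (pd_contDiffAt (hC3 x hx) j) i j).symm
  simp only [step]
  -- now: ∑ j, pd i (pd j (pd j f)) x = pd i (lap f) x
  have hlapf : lap f =ᶠ[nhds x] fun y => pd 0 (pd 0 f) y + pd 1 (pd 1 f) y := by
    filter_upwards with y
    rw [lap_eq]
    simp [Fin.sum_univ_two, pd]
  have hdiff : ∀ j : Fin 2, DifferentiableAt ℝ (pd j (pd j f)) x := by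
    intro j
    exact differentiableAt_pd (pd_contDiffAt (hC3 x hx) j) _
  rw [Fin.sum_univ_two]
  have hre : pd i (lap f) x
      = fderiv ℝ (fun y => pd 0 (pd 0 f) y + pd 1 (pd 1 f) y) x (EuclideanSpace.single i 1) := by
    show fderiv ℝ (lap f) x (EuclideanSpace.single i 1) = _
    rw [hlapf.fderiv_eq]
  rw [hre, fderiv_fun_add (hdiff 0) (hdiff 1)]
  rfl

lemma lap_add {f g : E2 → ℝ} {x : E2} (hf : ContDiffAt ℝ 2 f x) (hg : ContDiffAt ℝ 2 g x) :
    lap (fun y => f y + g y) x = lap f x + lap g x := by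
  unfold lap
  rw [← Finset.sum_add_distrib]
  apply Finset.sum_congr rfl
  intro i _
  set e : E2 := EuclideanSpace.single i 1
  have heq : (fun y => fderiv ℝ (fun z => f z + g z) y e)
      =ᶠ[nhds x] fun y => fderiv ℝ f y e + fderiv ℝ g y e := by
    filter_upwards [eventually_diff_of_contDiffAt hf, eventually_diff_of_contDiffAt hg]
      with y hfy hgy
    rw [fderiv_fun_add hfy hgy]; rfl
  rw [heq.fderiv_eq, fderiv_fun_add (differentiableAt_pd hf e) (differentiableAt_pd hg e)]
  rfl

lemma lap_sq {φ : E2 → ℝ} {x : E2} (hφ : ContDiffAt ℝ 2 φ x) :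
    lap (fun y => (φ y)^2) x
      = 2 * ∑ j : Fin 2, (pd j φ x)^2 + 2 * φ x * ∑ j : Fin 2, pd j (pd j φ) x := by
  have key : ∀ j : Fin 2,
      fderiv ℝ (fun y => fderiv ℝ (fun z => (φ z)^2) y (EuclideanSpace.single j 1)) x
        (EuclideanSpace.single j 1)
      = 2 * (pd j φ x)^2 + 2 * φ x * pd j (pd j φ) x := by
    intro j
    set e : E2 := EuclideanSpace.single j 1
    have heq : (fun y => fderiv ℝ (fun z => (φ z)^2) y e)
        =ᶠ[nhds x] fun y => 2 * φ y * pd j φ y := by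
      filter_upwards [eventually_diff_of_contDiffAt hφ] with y hy
      have hsq : (fun z => (φ z)^2) = fun z => φ z * φ z := by funext z; ring
      rw [hsq, fderiv_fun_mul hy hy]
      simp only [ContinuousLinearMap.add_apply, ContinuousLinearMap.smul_apply, smul_eq_mul]
      unfold pd
      ring
    rw [heq.fderiv_eq]
    have hd1 : DifferentiableAt ℝ (fun y => 2 * φ y) x := (hφ.differentiableAt (by norm_num)).const_mul 2
    have hd2 : DifferentiableAt ℝ (pd j φ) x := differentiableAt_pd hφ e
    have hmul := fderiv_fun_mul hd1 hd2
    rw [show (fun y => 2 * φ y * pd j φ y) = fun y => (fun z => 2 * φ z) y * pd j φ y from rfl,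
      hmul]
    simp only [ContinuousLinearMap.add_apply, ContinuousLinearMap.smul_apply, smul_eq_mul]
    rw [fderiv_const_mul (hφ.differentiableAt (by norm_num)) 2]
    simp only [ContinuousLinearMap.smul_apply, smul_eq_mul]
    unfold pd
    ring
  unfold lap
  simp only [key]
  rw [Finset.sum_add_distrib, ← Finset.mul_sum, ← Finset.mul_sum]

lemma quad_bound (a : ℝ) (ha : 0 < a) (A B d₁ d₂ η : ℝ) (hη : 0 ≤ η)
    (h1 : |d₁ - 1| ≤ η) (h2 : |d₂ - 1| ≤ η) :
    (8 * min 1 a - 16 * (1 + a) * η) * (A^2 + B^2) ≤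
      2 * (A * (2*(1+a)*d₁*A + 2*(1-a)*d₂*B) + B * (2*(1-a)*d₁*A + 2*(1+a)*d₂*B)) := by
  have hS : 2 * (A * (2*(1+a)*d₁*A + 2*(1-a)*d₂*B) + B * (2*(1-a)*d₁*A + 2*(1+a)*d₂*B))
      = 4*((A+B)^2 + a*(A-B)^2)
        + (4*(1+a)*((d₁-1)*A^2) + 4*(1+a)*((d₂-1)*B^2)
          + 4*(1-a)*((d₁-1)+(d₂-1))*(A*B)) := by ring
  have hbase : 8 * min 1 a * (A^2+B^2) ≤ 4*((A+B)^2 + a*(A-B)^2) := by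
    rcases le_total 1 a with h | h
    · rw [min_eq_left h]
      nlinarith [sq_nonneg (A-B), sq_nonneg (A+B), mul_nonneg (by linarith : (0:ℝ) ≤ a - 1) (sq_nonneg (A-B))]
    · rw [min_eq_right h]
      nlinarith [sq_nonneg (A-B), sq_nonneg (A+B), mul_nonneg (by linarith : (0:ℝ) ≤ 1 - a) (sq_nonneg (A+B))]
  have habs : |4*(1-a)*((d₁-1)+(d₂-1))*(A*B)| ≤ 4*(1+a)*η*(A^2+B^2) := by
    have hchain : |4*(1-a)*((d₁-1)+(d₂-1))*(A*B)|
        = 4 * |1-a| * |(d₁-1)+(d₂-1)| * |A*B| := by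
      rw [abs_mul, abs_mul, abs_mul]
      norm_num [abs_of_nonneg]
    rw [hchain]
    have h1a : |1-a| ≤ 1+a := by rw [abs_le]; constructor <;> linarith
    have hee : |(d₁-1)+(d₂-1)| ≤ 2*η := (abs_add_le _ _).trans (by linarith)
    have hab : |A*B| ≤ (A^2+B^2)/2 := by
      rw [abs_mul]
      nlinarith [sq_nonneg (|A|-|B|), sq_abs A, sq_abs B]
    calc 4 * |1-a| * |(d₁-1)+(d₂-1)| * |A*B| ≤ 4 * (1+a) * (2*η) * ((A^2+B^2)/2) := by
          gcongr <;> first | positivity | assumption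
      _ = 4*(1+a)*η*(A^2+B^2) := by ring
  have t1 : -(η*A^2) ≤ (d₁-1)*A^2 := by nlinarith [sq_nonneg A, (abs_le.1 h1).1]
  have t2 : -(η*B^2) ≤ (d₂-1)*B^2 := by nlinarith [sq_nonneg B, (abs_le.1 h2).1]
  have t1' : 4*(1+a)*(-(η*A^2)) ≤ 4*(1+a)*((d₁-1)*A^2) :=
    mul_le_mul_of_nonneg_left t1 (by linarith)
  have t2' : 4*(1+a)*(-(η*B^2)) ≤ 4*(1+a)*((d₂-1)*B^2) :=
    mul_le_mul_of_nonneg_left t2 (by linarith)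
  have t3' : -(4*(1+a)*η*(A^2+B^2)) ≤ 4*(1-a)*((d₁-1)+(d₂-1))*(A*B) := by
    have := neg_abs_le (4*(1-a)*((d₁-1)+(d₂-1))*(A*B))
    linarith
  have hslack : 0 ≤ (1+a)*η*(A^2+B^2) := by positivity
  nlinarith [hbase, t1', t2', t3', hslack, hS]

-- new helpers
lemma eventually_cocompact_radius {P : E2 → Prop} (h : ∀ᶠ x in cocompact E2, P x) :
    ∃ r : ℝ, ∀ x : E2, r ≤ ‖x‖ → P x := by
  obtain ⟨K, hK, hsub⟩ := hasBasis_cocompact.eventually_iff.1 h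
  obtain ⟨r, hr⟩ := hK.isBounded.subset_closedBall 0
  refine ⟨r + 1, fun x hx => hsub fun hmem => ?_⟩
  have := hr hmem
  simp only [Metric.mem_closedBall, dist_zero_right] at this
  linarith

lemma sq_contDiffAt {φ : E2 → ℝ} {x : E2} (h : ContDiffAt ℝ 2 φ x) :
    ContDiffAt ℝ 2 (fun y => (φ y)^2) x := by
  simpa only [pow_two] using h.mul h

lemma pd_exp_comb {v₁ v₂ : E2 → ℝ} {x : E2} (h₁ : DifferentiableAt ℝ v₁ x)
    (h₂ : DifferentiableAt ℝ v₂ x) (c₁ c₂ : ℝ) (i : Fin 2) :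
    fderiv ℝ (fun y => c₁ * (Real.exp (v₁ y) - 1) + c₂ * (Real.exp (v₂ y) - 1)) x
        (EuclideanSpace.single i 1)
      = c₁ * Real.exp (v₁ x) * pd i v₁ x + c₂ * Real.exp (v₂ x) * pd i v₂ x := by
  have e₁ : HasFDerivAt (fun y => Real.exp (v₁ y)) (Real.exp (v₁ x) • fderiv ℝ v₁ x) x :=
    (Real.hasDerivAt_exp (v₁ x)).comp_hasFDerivAt x h₁.hasFDerivAt
  have e₂ : HasFDerivAt (fun y => Real.exp (v₂ y)) (Real.exp (v₂ x) • fderiv ℝ v₂ x) x :=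
    (Real.hasDerivAt_exp (v₂ x)).comp_hasFDerivAt x h₂.hasFDerivAt
  have h := ((e₁.sub_const 1).const_mul c₁).fun_add ((e₂.sub_const 1).const_mul c₂)
  rw [h.fderiv]
  simp only [ContinuousLinearMap.add_apply, ContinuousLinearMap.smul_apply, smul_eq_mul]
  unfold pd
  ring


/-- gradient exponential decay estimate (2.47). Let `p, q > 0`,
`p ≠ q`, `K` the coupling matrix, `λ₀ = 4·min{2, 2q/p}`. If `v₁, v₂` are `C³` outside the
disk of radius `R₀`, with `v₁, v₂, |∇v₁|, |∇v₂| → 0` at infinity, and solve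
`Δvᵢ = 2k_{i1}v₁ + 2k_{i2}v₂ + 2k_{i1}(e^{v₁}−v₁−1) + 2k_{i2}(e^{v₂}−v₂−1)` there, then
for every `δ ∈ (0,1)` there are `C_δ > 0` and `R ≥ R₀` with
`|∇v₁|² + |∇v₂|² ≤ C_δ·e^{−(1−δ)√λ₀|x|}` for `|x| ≥ R`. -/
theorem gradient_exponential_decay_of_solutions
    (p q : ℝ) (hp : 0 < p) (hq : 0 < q) (hpq : p ≠ q)
    (k11 k12 k21 k22 lam₀ : ℝ)
    (h11 : k11 = (p + q) / p) (h12 : k12 = (p - q) / p)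
    (h21 : k21 = (p - q) / p) (h22 : k22 = (p + q) / p)
    (hlam : lam₀ = 4 * min 2 (2 * q / p))
    (R₀ : ℝ) (hR₀ : 0 < R₀)
    (v₁ v₂ : EuclideanSpace ℝ (Fin 2) → ℝ)
    (hreg1 : ContDiffOn ℝ 3 v₁ {x | R₀ < ‖x‖})
    (hreg2 : ContDiffOn ℝ 3 v₂ {x | R₀ < ‖x‖})
    (hlim1 : Tendsto v₁ (cocompact (EuclideanSpace ℝ (Fin 2))) (nhds 0))
    (hlim2 : Tendsto v₂ (cocompact (EuclideanSpace ℝ (Fin 2))) (nhds 0))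
    (hglim1 : Tendsto (fun x => ‖fderiv ℝ v₁ x‖)
      (cocompact (EuclideanSpace ℝ (Fin 2))) (nhds 0))
    (hglim2 : Tendsto (fun x => ‖fderiv ℝ v₂ x‖)
      (cocompact (EuclideanSpace ℝ (Fin 2))) (nhds 0))
    (hpde : ∀ x, R₀ < ‖x‖ →
      lap v₁ x = 2 * k11 * v₁ x + 2 * k12 * v₂ x
          + 2 * k11 * (Real.exp (v₁ x) - v₁ x - 1)
          + 2 * k12 * (Real.exp (v₂ x) - v₂ x - 1) ∧
      lap v₂ x = 2 * k21 * v₁ x + 2 * k22 * v₂ x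
          + 2 * k21 * (Real.exp (v₁ x) - v₁ x - 1)
          + 2 * k22 * (Real.exp (v₂ x) - v₂ x - 1)) :
    ∀ δ ∈ Set.Ioo (0 : ℝ) 1, ∃ C > (0 : ℝ), ∃ R ≥ R₀, ∀ x, R ≤ ‖x‖ →
      ‖fderiv ℝ v₁ x‖ ^ 2 + ‖fderiv ℝ v₂ x‖ ^ 2
        ≤ C * Real.exp (-(1 - δ) * Real.sqrt lam₀ * ‖x‖) := by
  intro δ hδ
  obtain ⟨hδ0, hδ1⟩ := hδ
  set U : Set E2 := {x | R₀ < ‖x‖} with hUdef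
  have hUopen : IsOpen U := isOpen_lt continuous_const continuous_norm
  set a : ℝ := q / p with hadef
  have ha : 0 < a := div_pos hq hp
  -- lam₀ = 8 * min 1 a
  have hlam' : lam₀ = 8 * min 1 a := by
    rw [hlam]
    have h2 : 2 * q / p = 2 * a := by rw [hadef]; ring
    rw [h2]
    rcases le_total 1 a with h | h
    · rw [min_eq_left h, min_eq_left (by linarith)]; ring
    · rw [min_eq_right h, min_eq_right (by linarith)]; ring
  have hlam0 : 0 < lam₀ := by
    rw [hlam']
    rcases le_total 1 a with h | h
    · rw [min_eq_left h]; norm_num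
    · rw [min_eq_right h]; linarith
  set α : ℝ := (1 - δ) * Real.sqrt lam₀ with hαdef
  have hαpos : 0 < α := mul_pos (by linarith) (Real.sqrt_pos.2 hlam0)
  have hα2 : α ^ 2 = (1 - δ)^2 * lam₀ := by
    rw [hαdef, mul_pow, Real.sq_sqrt hlam0.le]
  have hα2lt : α ^ 2 < lam₀ := by
    rw [hα2]
    have h1 : (1 - δ)^2 < 1 := by nlinarith
    nlinarith [mul_lt_mul_of_pos_right h1 hlam0]
  set μ : ℝ := (lam₀ + α ^ 2) / 2 with hμdef
  have hμ1 : α ^ 2 < μ := by rw [hμdef]; linarith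
  have hμ2 : μ < lam₀ := by rw [hμdef]; linarith
  set η : ℝ := (lam₀ - μ) / (16 * (1 + a)) with hηdef
  have hηpos : 0 < η := by
    apply div_pos (by linarith) (by linarith)
  have hcoef : 8 * min 1 a - 16 * (1 + a) * η = μ := by
    have h16 : 16 * (1 + a) * η = lam₀ - μ := by
      rw [hηdef]; field_simp
    rw [h16, ← hlam']; ring
  -- k entries in terms of a
  have hk11 : k11 = 1 + a := by rw [h11, hadef]; field_simp
  have hk12 : k12 = 1 - a := by rw [h12, hadef]; field_simp; try ring
  have hk21 : k21 = 1 - a := by rw [h21, hadef]; field_simp; try ring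
  have hk22 : k22 = 1 + a := by rw [h22, hadef]; field_simp
  -- radius where exponentials are η-close to 1
  have hexp1 : Tendsto (fun x => Real.exp (v₁ x)) (cocompact E2) (nhds 1) := by
    have := (Real.continuous_exp.tendsto 0).comp hlim1
    simpa [Function.comp_def] using this
  have hexp2 : Tendsto (fun x => Real.exp (v₂ x)) (cocompact E2) (nhds 1) := by
    have := (Real.continuous_exp.tendsto 0).comp hlim2
    simpa [Function.comp_def] using this
  have hev : ∀ᶠ x in cocompact E2,
      |Real.exp (v₁ x) - 1| ≤ η ∧ |Real.exp (v₂ x) - 1| ≤ η := by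
    have h1 := Metric.tendsto_nhds.1 hexp1 η hηpos
    have h2 := Metric.tendsto_nhds.1 hexp2 η hηpos
    filter_upwards [h1, h2] with x hx1 hx2
    rw [Real.dist_eq] at hx1 hx2
    exact ⟨hx1.le, hx2.le⟩
  obtain ⟨r₁, hr₁⟩ := eventually_cocompact_radius hev
  set R₂ : ℝ := max r₁ R₀ + 1 with hR₂def
  have hR₂R₀ : R₀ < R₂ := by
    have := le_max_right r₁ R₀
    simp only [hR₂def]; linarith
  have hR₂r₁ : r₁ ≤ R₂ := by
    have := le_max_left r₁ R₀
    simp only [hR₂def]; linarith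
  have hR₂pos : 0 < R₂ := by linarith
  have hsubU : ∀ x : E2, R₂ ≤ ‖x‖ → x ∈ U := fun x hx => by
    simp only [hUdef, Set.mem_setOf_eq]; linarith
  -- the gradient-square function
  set W : E2 → ℝ := fun y => ∑ i : Fin 2, (fderiv ℝ v₁ y (EuclideanSpace.single i 1))^2
      + ∑ i : Fin 2, (fderiv ℝ v₂ y (EuclideanSpace.single i 1))^2 with hWdef
  have hWnorm : ∀ y : E2, ‖fderiv ℝ v₁ y‖^2 + ‖fderiv ℝ v₂ y‖^2 = W y := by
    intro y
    rw [hWdef]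
    rw [norm_clm_sq (fderiv ℝ v₁ y), norm_clm_sq (fderiv ℝ v₂ y)]
  -- regularity of W
  have hC3 : ∀ x ∈ U, ContDiffAt ℝ 3 v₁ x ∧ ContDiffAt ℝ 3 v₂ x := fun x hx =>
    ⟨hreg1.contDiffAt (hUopen.mem_nhds hx), hreg2.contDiffAt (hUopen.mem_nhds hx)⟩
  have hWsum : W = fun y => (((pd 0 v₁ y)^2 + (pd 1 v₁ y)^2) + ((pd 0 v₂ y)^2 + (pd 1 v₂ y)^2)) := by
    funext y
    rw [hWdef]
    simp [Fin.sum_univ_two, pd]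
    try ring
  have hWC2 : ∀ x ∈ U, ContDiffAt ℝ 2 W x := by
    intro x hx
    rw [hWsum]
    obtain ⟨h1, h2⟩ := hC3 x hx
    exact ((sq_contDiffAt (pd_contDiffAt h1 0)).add (sq_contDiffAt (pd_contDiffAt h1 1))).add
      ((sq_contDiffAt (pd_contDiffAt h2 0)).add (sq_contDiffAt (pd_contDiffAt h2 1)))
  have hWcont : ContinuousOn W {x : E2 | R₂ ≤ ‖x‖} := by
    intro x hx
    exact ((hWC2 x (hsubU x hx)).continuousAt).continuousWithinAt
  have hWlim : Tendsto W (cocompact E2) (nhds 0) := by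
    have h := (hglim1.mul hglim1).add (hglim2.mul hglim2)
    simp only [mul_zero, add_zero] at h
    have heq : (fun x => ‖fderiv ℝ v₁ x‖ * ‖fderiv ℝ v₁ x‖ + ‖fderiv ℝ v₂ x‖ * ‖fderiv ℝ v₂ x‖)
        = W := by
      funext y
      rw [← hWnorm y]; ring
    rwa [heq] at h
  -- the key differential inequality
  have hlapW : ∀ x : E2, R₂ < ‖x‖ → μ * W x ≤ lap W x := by
    intro x hx
    have hxU : x ∈ U := hsubU x hx.le
    obtain ⟨hv1, hv2⟩ := hC3 x hxU
    obtain ⟨hb1, hb2⟩ := hr₁ x (by linarith)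
    set d₁ : ℝ := Real.exp (v₁ x) with hd₁
    set d₂ : ℝ := Real.exp (v₂ x) with hd₂
    -- PDE in simplified form, on U
    have hpde1 : lap v₁ =ᶠ[nhds x] fun y =>
        (2*k11) * (Real.exp (v₁ y) - 1) + (2*k12) * (Real.exp (v₂ y) - 1) := by
      filter_upwards [hUopen.mem_nhds hxU] with y hy
      have := (hpde y hy).1
      rw [this]; ring
    have hpde2 : lap v₂ =ᶠ[nhds x] fun y =>
        (2*k21) * (Real.exp (v₁ y) - 1) + (2*k22) * (Real.exp (v₂ y) - 1) := by
      filter_upwards [hUopen.mem_nhds hxU] with y hy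
      have := (hpde y hy).2
      rw [this]; ring
    have hd1diff : DifferentiableAt ℝ v₁ x := hv1.differentiableAt (by norm_num)
    have hd2diff : DifferentiableAt ℝ v₂ x := hv2.differentiableAt (by norm_num)
    -- third derivative sums
    have hthird1 : ∀ i : Fin 2, ∑ j : Fin 2, pd j (pd j (pd i v₁)) x
        = (2*k11) * d₁ * pd i v₁ x + (2*k12) * d₂ * pd i v₂ x := by
      intro i
      rw [sum_pd_pd_pd hUopen hxU hreg1 i]
      have : pd i (lap v₁) x = fderiv ℝ (fun y =>
          (2*k11) * (Real.exp (v₁ y) - 1) + (2*k12) * (Real.exp (v₂ y) - 1)) x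
          (EuclideanSpace.single i 1) := by
        unfold pd
        rw [hpde1.fderiv_eq]
      rw [this, pd_exp_comb hd1diff hd2diff, ← hd₁, ← hd₂]
    have hthird2 : ∀ i : Fin 2, ∑ j : Fin 2, pd j (pd j (pd i v₂)) x
        = (2*k21) * d₁ * pd i v₁ x + (2*k22) * d₂ * pd i v₂ x := by
      intro i
      rw [sum_pd_pd_pd hUopen hxU hreg2 i]
      have : pd i (lap v₂) x = fderiv ℝ (fun y =>
          (2*k21) * (Real.exp (v₁ y) - 1) + (2*k22) * (Real.exp (v₂ y) - 1)) x
          (EuclideanSpace.single i 1) := by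
        unfold pd
        rw [hpde2.fderiv_eq]
      rw [this, pd_exp_comb hd1diff hd2diff, ← hd₁, ← hd₂]
    -- expand lap W
    have hlapWx : lap W x =
        (lap (fun y => (pd 0 v₁ y)^2) x + lap (fun y => (pd 1 v₁ y)^2) x)
        + (lap (fun y => (pd 0 v₂ y)^2) x + lap (fun y => (pd 1 v₂ y)^2) x) := by
      rw [hWsum]
      rw [lap_add ((sq_contDiffAt (pd_contDiffAt hv1 0)).add (sq_contDiffAt (pd_contDiffAt hv1 1)))
        ((sq_contDiffAt (pd_contDiffAt hv2 0)).add (sq_contDiffAt (pd_contDiffAt hv2 1)))]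
      rw [lap_add (sq_contDiffAt (pd_contDiffAt hv1 0)) (sq_contDiffAt (pd_contDiffAt hv1 1))]
      rw [lap_add (sq_contDiffAt (pd_contDiffAt hv2 0)) (sq_contDiffAt (pd_contDiffAt hv2 1))]
    have hsq1 : ∀ i : Fin 2, lap (fun y => (pd i v₁ y)^2) x
        = 2 * ∑ j : Fin 2, (pd j (pd i v₁) x)^2
          + 2 * pd i v₁ x * ((2*k11) * d₁ * pd i v₁ x + (2*k12) * d₂ * pd i v₂ x) := by
      intro i
      rw [lap_sq (pd_contDiffAt hv1 i), ← hthird1 i]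
    have hsq2 : ∀ i : Fin 2, lap (fun y => (pd i v₂ y)^2) x
        = 2 * ∑ j : Fin 2, (pd j (pd i v₂) x)^2
          + 2 * pd i v₂ x * ((2*k21) * d₁ * pd i v₁ x + (2*k22) * d₂ * pd i v₂ x) := by
      intro i
      rw [lap_sq (pd_contDiffAt hv2 i), ← hthird2 i]
    have hq0 := quad_bound a ha (pd 0 v₁ x) (pd 0 v₂ x) d₁ d₂ η hηpos.le hb1 hb2
    have hq1 := quad_bound a ha (pd 1 v₁ x) (pd 1 v₂ x) d₁ d₂ η hηpos.le hb1 hb2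
    rw [hcoef] at hq0 hq1
    have hWx : W x = ((pd 0 v₁ x)^2 + (pd 1 v₁ x)^2) + ((pd 0 v₂ x)^2 + (pd 1 v₂ x)^2) := by
      rw [hWsum]
    have hσ1 : ∀ i : Fin 2, 0 ≤ ∑ j : Fin 2, (pd j (pd i v₁) x)^2 :=
      fun i => Finset.sum_nonneg fun j _ => sq_nonneg _
    have hσ2 : ∀ i : Fin 2, 0 ≤ ∑ j : Fin 2, (pd j (pd i v₂) x)^2 :=
      fun i => Finset.sum_nonneg fun j _ => sq_nonneg _
    rw [hlapWx, hsq1 0, hsq1 1, hsq2 0, hsq2 1, hWx]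
    rw [hk11, hk12, hk21, hk22]
    linarith [hσ1 0, hσ1 1, hσ2 0, hσ2 1, hq0, hq1]
  -- boundary constant
  have hsphere : IsCompact (Metric.sphere (0:E2) R₂) := isCompact_sphere 0 R₂
  have hsne : (Metric.sphere (0:E2) R₂).Nonempty :=
    NormedSpace.sphere_nonempty.2 hR₂pos.le
  have hWcontS : ContinuousOn W (Metric.sphere (0:E2) R₂) := by
    apply hWcont.mono
    intro y hy
    simp only [Metric.mem_sphere, dist_zero_right] at hy
    simp only [Set.mem_setOf_eq, hy, le_refl]
  obtain ⟨z₀, hz₀mem, hz₀max⟩ := hsphere.exists_isMaxOn hsne hWcontS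
  set M : ℝ := W z₀ with hMdef
  set CC : ℝ := (max M 0 + 1) * Real.exp (α * R₂) with hCCdef
  have hCCpos : 0 < CC := by
    apply mul_pos _ (Real.exp_pos _)
    have := le_max_right M 0
    linarith
  have hbd : ∀ x : E2, ‖x‖ = R₂ → W x ≤ CC * Real.exp (-α * ‖x‖) := by
    intro x hxn
    have hxmem : x ∈ Metric.sphere (0:E2) R₂ := by
      simp [Metric.mem_sphere, dist_zero_right, hxn]
    have h1 : W x ≤ M := hz₀max hxmem
    have h2 : CC * Real.exp (-α * ‖x‖) = max M 0 + 1 := by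
      rw [hCCdef, hxn, mul_assoc, ← Real.exp_add]
      have : α * R₂ + -α * R₂ = 0 := by ring
      rw [this, Real.exp_zero, mul_one]
    rw [h2]
    have := le_max_left M 0
    linarith
  -- apply the maximum principle
  have hfinal := max_principle W μ α CC R₂ hμ1 hαpos hCCpos hR₂pos hWcont
    (fun x hx => hWC2 x (hsubU x hx.le)) hWlim hlapW hbd
  refine ⟨CC, hCCpos, R₂, by linarith, ?_⟩
  intro x hx
  have hWb := hfinal x hx
  have hexpeq : -(1 - δ) * Real.sqrt lam₀ * ‖x‖ = -α * ‖x‖ := by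
    rw [hαdef]; ring
  rw [hexpeq, hWnorm x]
  exact hWb
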